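/- Multidimensional δ lemma: Let ι: P_q → V = ℝ^N be an isometric inclusion (via an orthonormal basis), let Ã_1,...,Ã_d be N×N symmetric commuting extensions of the matrices A_i representing the operators χ_i on P_q, satisfying the compatibility condition Ã_i(ιp') = ι(x_i p') for all p' ∈ P_{q-1} and all i. Let {u_α} be a common orthonormal eigenbasis with Ã_i u_α = Λ_{iα} u_α, and set λ_α = (Λ_{1α},...,Λ_{dα}) ∈ ℝ^d. Then for every p ∈ P_q, ⟨ιp, u_α⟩ = ⟨ι1, u_α⟩ · p(λ_α). -/
import Mathlib


open MeasureTheory Matrix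

/-- the multidimensional δ lemma: for commuting symmetric extensions
satisfying the compatibility condition, with common orthonormal eigenbasis {u_α},
⟨ιp, u_α⟩ = ⟨ι1, u_α⟩ · p(λ_α) for every p of total degree ≤ q. -/
theorem multidimensional_delta_lemma
    (d q n N : ℕ) (hnN : n ≤ N)
    (A : Fin d → Matrix (Fin n) (Fin n) ℝ)
    (Atil : Fin d → Matrix (Fin N) (Fin N) ℝ)
    (hsymm : ∀ i, (Atil i).IsSymm)
    (hext : ∀ i a b, Atil i (Fin.castLE hnN a) (Fin.castLE hnN b) = A i a b)
    (hcomm : ∀ i j, Atil i * Atil j = Atil j * Atil i)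
    (ι : MvPolynomial (Fin d) ℝ →ₗ[ℝ] (Fin N → ℝ))
    (hcompat : ∀ i, ∀ p : MvPolynomial (Fin d) ℝ, p.totalDegree + 1 ≤ q →
      (Atil i).mulVec (ι p) = ι (MvPolynomial.X i * p))
    (u : Fin N → Fin N → ℝ)
    (horth : ∀ α β, u α ⬝ᵥ u β = if α = β then (1 : ℝ) else 0)
    (Λ : Fin d → Fin N → ℝ)
    (heig : ∀ i α, (Atil i).mulVec (u α) = Λ i α • u α) :
    ∀ p : MvPolynomial (Fin d) ℝ, p.totalDegree ≤ q → ∀ α,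
      ι p ⬝ᵥ u α = (ι 1 ⬝ᵥ u α) * MvPolynomial.eval (fun i => Λ i α) p := by
  -- symmetric matrices can be moved across the dot product, giving eigenvalues
  have hdot : ∀ i (v : Fin N → ℝ) α,
      (Atil i).mulVec v ⬝ᵥ u α = Λ i α * (v ⬝ᵥ u α) := by
    intro i v α
    have h1 : (Atil i).mulVec v ⬝ᵥ u α = v ⬝ᵥ (Atil i).mulVec (u α) := by
      rw [Matrix.dotProduct_mulVec, ← Matrix.mulVec_transpose, (hsymm i).eq]
    rw [h1, heig, dotProduct_smul, smul_eq_mul]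
  -- the claim for monomials, by induction on total degree
  have hmono : ∀ k : ℕ, ∀ s : Fin d →₀ ℕ, (s.sum fun _ e => e) = k → k ≤ q → ∀ α,
      ι (MvPolynomial.monomial s 1) ⬝ᵥ u α =
        (ι 1 ⬝ᵥ u α) * MvPolynomial.eval (fun i => Λ i α)
          (MvPolynomial.monomial s 1) := by
    intro k
    induction k with
    | zero =>
      intro s hs _ α
      have hz : ∀ j ∈ s.support, s j = 0 := by
        rw [Finsupp.sum] at hs
        exact fun j hj => Finset.sum_eq_zero_iff.mp hs j hj
      have hs0 : s = 0 := Finsupp.ext fun j => by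
        by_cases h : j ∈ s.support
        · exact hz j h
        · simpa using Finsupp.notMem_support_iff.mp h
      subst hs0
      simp [MvPolynomial.monomial_zero']
    | succ k ih =>
      intro s hs hkq α
      -- pick a variable with positive exponent
      have hsne : s ≠ 0 := by
        intro h; rw [h] at hs; simp at hs
      obtain ⟨i, hi⟩ : ∃ i, s i ≠ 0 := by
        by_contra h
        push_neg at h
        exact hsne (Finsupp.ext fun j => h j)
      set s' : Fin d →₀ ℕ := s - Finsupp.single i 1 with hs'
      have hsum : Finsupp.single i 1 + s' = s := by
        ext j
        simp only [Finsupp.add_apply, Finsupp.tsub_apply, Finsupp.single_apply, hs']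
        rcases eq_or_ne i j with h | h
        · subst h
          have h1 : 1 ≤ s i := Nat.one_le_iff_ne_zero.2 hi
          simp
          omega
        · simp [h]
      have hs'sum : (s'.sum fun _ e => e) = k := by
        have h2 := hsum ▸ hs
        rw [Finsupp.sum_add_index (by simp) (by intros; rfl)] at h2
        simp [Finsupp.sum_single_index] at h2
        omega
      have hdeg : (MvPolynomial.monomial s' (1:ℝ)).totalDegree + 1 ≤ q := by
        rw [MvPolynomial.totalDegree_monomial _ one_ne_zero, hs'sum]
        omega
      have hX : MvPolynomial.X i * MvPolynomial.monomial s' (1:ℝ) =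
          MvPolynomial.monomial s 1 := by
        rw [← hsum, MvPolynomial.monomial_single_add, pow_one]
      calc ι (MvPolynomial.monomial s 1) ⬝ᵥ u α
          = (Atil i).mulVec (ι (MvPolynomial.monomial s' 1)) ⬝ᵥ u α := by
            rw [hcompat i _ hdeg, hX]
        _ = Λ i α * (ι (MvPolynomial.monomial s' 1) ⬝ᵥ u α) := hdot i _ α
        _ = Λ i α * ((ι 1 ⬝ᵥ u α) * MvPolynomial.eval (fun j => Λ j α)
              (MvPolynomial.monomial s' 1)) := by
            rw [ih s' hs'sum (by omega) α]
        _ = (ι 1 ⬝ᵥ u α) * MvPolynomial.eval (fun j => Λ j α)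
              (MvPolynomial.monomial s 1) := by
            rw [← hX]
            simp [MvPolynomial.eval_mul]
            ring
  -- general case by linearity
  have hsum_dot : ∀ (t : Finset (Fin d →₀ ℕ)) (f : (Fin d →₀ ℕ) → Fin N → ℝ)
      (w : Fin N → ℝ), (∑ x ∈ t, f x) ⬝ᵥ w = ∑ x ∈ t, f x ⬝ᵥ w := by
    intro t f w
    simp only [dotProduct, Finset.sum_apply, Finset.sum_mul]
    exact Finset.sum_comm
  intro p hp α
  conv_lhs => rw [p.as_sum]
  have hrw : ∀ s ∈ p.support, MvPolynomial.monomial s (p.coeff s) =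
      p.coeff s • MvPolynomial.monomial s (1:ℝ) := by
    intro s _
    rw [MvPolynomial.smul_monomial, smul_eq_mul, mul_one]
  rw [Finset.sum_congr rfl hrw, map_sum, hsum_dot]
  conv_rhs => rw [p.as_sum, map_sum]
  rw [Finset.mul_sum]
  apply Finset.sum_congr rfl
  intro s hs
  rw [_root_.map_smul, smul_dotProduct, smul_eq_mul,
    hmono _ s rfl (le_trans (MvPolynomial.le_totalDegree hs) hp) α]
  simp [MvPolynomial.eval_monomial]
  ring
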